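/- Multiple robustness, case (i) with correct exposure density: let Q̄ : ℝ × 𝒲 → ℝ be bounded measurable (an arbitrary outcome regression), define D(w, a, y) := H₀(a, w)(y − Q̄(a, w)) + Q̄(a + δ(w), w) − ψ₀, and let G : ℝ × 𝒲 → ℝ be a bounded measurable function satisfying G(Y, W) = E[D(W, A, Y) ∣ σ(Y, W)] a.s. (the correctly specified conditional influence-function regression). Then for every measurable g : ℝ × 𝒲 → ℝ with ε' ≤ g ≤ 1 for some ε' > 0 (an arbitrary, possibly incorrect sampling mechanism), E[(C / g(Y, W)) D(W, A, Y) − (C / g(Y, W) − 1) G(Y, W)] = 0. -/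

import Mathlib

open MeasureTheory ProbabilityTheory

lemma int_bdd {Ω : Type*} [MeasurableSpace Ω] {P : Measure Ω} [IsFiniteMeasure P]
    {f : Ω → ℝ} (hf : AEStronglyMeasurable f P) {M : ℝ} (h : ∀ ω, |f ω| ≤ M) :
    Integrable f P :=
  ⟨hf, HasFiniteIntegral.of_bounded (C := M)
    (Filter.Eventually.of_forall (by simpa [Real.norm_eq_abs] using h))⟩

lemma abs_mul_le' {a b Ma Mb : ℝ} (ha : |a| ≤ Ma) (hb : |b| ≤ Mb) : |a * b| ≤ Ma * Mb := by
  rw [abs_mul]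
  exact mul_le_mul ha hb (abs_nonneg _) ((abs_nonneg a).trans ha)

open ENNReal in
lemma mass_lemma {Ω 𝒲 : Type*} [MeasurableSpace Ω] [MeasurableSpace 𝒲]
    (P : Measure Ω) [IsProbabilityMeasure P]
    {W : Ω → 𝒲} (hW : Measurable W) {A : Ω → ℝ} (hA : Measurable A)
    {q₀ : ℝ × 𝒲 → ℝ} (hq₀_meas : Measurable q₀) (hq₀_pos : ∀ x, 0 < q₀ x)
    (hq₀_density : ∀ f : ℝ × 𝒲 → ℝ, Measurable f → (∃ M : ℝ, ∀ x, |f x| ≤ M) →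
      ∫ ω, f (A ω, W ω) ∂P = ∫ ω, (∫ a : ℝ, f (a, W ω) * q₀ (a, W ω)) ∂P)
    {S : Set (ℝ × 𝒲)} (hS : MeasurableSet S) :
    ∫⁻ ω, (∫⁻ a, S.indicator (fun x => ENNReal.ofReal (q₀ x)) (a, W ω)) ∂P
      = P ((fun ω => (A ω, W ω)) ⁻¹' S) := by
  classical
  set f : ℕ → ℝ × 𝒲 → ℝ := fun n x => if x ∈ S ∧ |x.1| ≤ n then min 1 ((n : ℝ) / q₀ x) else 0
    with hf_def
  have hSn : ∀ n : ℕ, MeasurableSet {x : ℝ × 𝒲 | x ∈ S ∧ |x.1| ≤ (n : ℝ)} := by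
    intro n
    exact hS.inter (((measurable_fst (α := ℝ) (β := 𝒲)).abs) measurableSet_Iic)
  have hf_meas : ∀ n, Measurable (f n) := by
    intro n
    exact Measurable.ite (hSn n) (measurable_const.min (measurable_const.div hq₀_meas))
      measurable_const
  have hf_nonneg : ∀ n x, 0 ≤ f n x := by
    intro n x
    simp only [hf_def]
    split_ifs with h
    · exact le_min zero_le_one (div_nonneg (Nat.cast_nonneg n) (hq₀_pos x).le)
    · exact le_rfl
  have hf_le_one : ∀ n x, f n x ≤ 1 := by
    intro n x
    simp only [hf_def]
    split_ifs with h
    · exact min_le_left _ _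
    · exact zero_le_one
  have hf_bd : ∀ n x, |f n x| ≤ 1 := fun n x =>
    abs_le.2 ⟨by linarith [hf_nonneg n x], hf_le_one n x⟩
  have hf_mono : ∀ {m n : ℕ}, m ≤ n → ∀ x, f m x ≤ f n x := by
    intro m n hmn x
    simp only [hf_def]
    split_ifs with h1 h2 h2
    · exact min_le_min le_rfl ((div_le_div_iff_of_pos_right (hq₀_pos x)).2 (by exact_mod_cast hmn))
    · exact absurd ⟨h1.1, h1.2.trans (by exact_mod_cast hmn)⟩ h2
    · exact le_min zero_le_one (div_nonneg (Nat.cast_nonneg n) (hq₀_pos x).le)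
    · exact le_rfl
  have hfq : ∀ n x, f n x * q₀ x = if x ∈ S ∧ |x.1| ≤ (n : ℝ) then min (q₀ x) n else 0 := by
    intro n x
    simp only [hf_def]
    split_ifs with h
    · rcases le_total ((n : ℝ) / q₀ x) 1 with hle | hle
      · rw [min_eq_right hle, div_mul_cancel₀ _ (hq₀_pos x).ne',
          min_eq_right ((div_le_one (hq₀_pos x)).1 hle)]
      · rw [min_eq_left hle, one_mul, min_eq_left ((one_le_div (hq₀_pos x)).1 hle)]
    · exact zero_mul _
  set G : ℕ → ℝ × 𝒲 → ℝ≥0∞ := fun n x => ENNReal.ofReal (f n x * q₀ x) with hG_def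
  have hG_meas : ∀ n, Measurable (G n) := fun n => ((hf_meas n).mul hq₀_meas).ennreal_ofReal
  have hfq_mono : ∀ {m n : ℕ}, m ≤ n → ∀ x, f m x * q₀ x ≤ f n x * q₀ x := fun {m n} hmn x =>
    mul_le_mul_of_nonneg_right (hf_mono hmn x) (hq₀_pos x).le
  have hG_mono : ∀ {m n : ℕ}, m ≤ n → ∀ x, G m x ≤ G n x := fun hmn x =>
    ENNReal.ofReal_le_ofReal (hfq_mono hmn x)
  have hG_sup : ∀ x, (⨆ n, G n x) = S.indicator (fun x => ENNReal.ofReal (q₀ x)) x := by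
    intro x
    apply le_antisymm
    · refine iSup_le fun n => ?_
      simp only [hG_def]
      rw [hfq n x]
      split_ifs with h
      · rw [Set.indicator_of_mem h.1]
        exact ENNReal.ofReal_le_ofReal (min_le_left _ _)
      · simp
    · by_cases hx : x ∈ S
      · rw [Set.indicator_of_mem hx]
        obtain ⟨n, hn⟩ := exists_nat_ge (max |x.1| (q₀ x))
        refine le_iSup_of_le n ?_
        simp only [hG_def]
        rw [hfq n x, if_pos ⟨hx, (le_max_left _ _).trans hn⟩,
          min_eq_left ((le_max_right _ _).trans hn)]
      · simp [Set.indicator_of_notMem hx]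
  have hint_a : ∀ n (w : 𝒲), Integrable (fun a => f n (a, w) * q₀ (a, w)) := by
    intro n w
    have hind : Integrable ((Set.Icc (-(n : ℝ)) n).indicator fun _ => (n : ℝ)) := by
      rw [integrable_indicator_iff measurableSet_Icc]
      exact integrableOn_const measure_Icc_lt_top.ne
    refine Integrable.mono' hind
      ((((hf_meas n).mul hq₀_meas).comp
        (measurable_id.prodMk measurable_const)).aestronglyMeasurable) ?_
    refine Filter.Eventually.of_forall fun a => ?_
    rw [Real.norm_eq_abs, hfq]
    split_ifs with h
    · have ha : a ∈ Set.Icc (-(n : ℝ)) n := by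
        rcases abs_le.1 h.2 with ⟨h1, h2⟩; exact ⟨h1, h2⟩
      rw [Set.indicator_of_mem ha,
        abs_of_nonneg (le_min (hq₀_pos _).le (Nat.cast_nonneg n))]
      exact min_le_right _ _
    · rw [abs_zero]
      exact Set.indicator_nonneg (fun _ _ => Nat.cast_nonneg n) a
  have hL1 : ∀ n ω, (∫⁻ a, G n (a, W ω))
      = ENNReal.ofReal (∫ a, f n (a, W ω) * q₀ (a, W ω)) := by
    intro n ω
    exact (ofReal_integral_eq_lintegral_ofReal (hint_a n (W ω))
      (Filter.Eventually.of_forall fun a => mul_nonneg (hf_nonneg n _) (hq₀_pos _).le)).symm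
  have hJ_sm : ∀ n, StronglyMeasurable (fun ω => ∫ a, f n (a, W ω) * q₀ (a, W ω)) := by
    intro n
    have : StronglyMeasurable (fun p : Ω × ℝ => f n (p.2, W p.1) * q₀ (p.2, W p.1)) :=
      (((hf_meas n).mul hq₀_meas).comp
        (measurable_snd.prodMk (hW.comp measurable_fst))).stronglyMeasurable
    exact this.integral_prod_right'
  have hJ_nonneg : ∀ n ω, 0 ≤ ∫ a, f n (a, W ω) * q₀ (a, W ω) := fun n ω =>
    integral_nonneg fun a => mul_nonneg (hf_nonneg n _) (hq₀_pos _).le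
  have hJ_bd : ∀ n ω, |∫ a, f n (a, W ω) * q₀ (a, W ω)|
      ≤ (volume (Set.Icc (-(n : ℝ)) (n : ℝ))).toReal * n := by
    intro n ω
    rw [abs_of_nonneg (hJ_nonneg n ω), ← smul_eq_mul, ← measureReal_def,
      ← integral_indicator_const (n : ℝ) (measurableSet_Icc (a := -(n : ℝ)) (b := (n : ℝ)))]
    refine integral_mono (hint_a n (W ω)) ?_ fun a => ?_
    · rw [integrable_indicator_iff measurableSet_Icc]
      exact integrableOn_const measure_Icc_lt_top.ne
    · rw [hfq]
      split_ifs with h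
      · have ha : a ∈ Set.Icc (-(n : ℝ)) n := by
          rcases abs_le.1 h.2 with ⟨h1, h2⟩; exact ⟨h1, h2⟩
        rw [Set.indicator_of_mem ha]
        exact min_le_right _ _
      · exact Set.indicator_nonneg (fun _ _ => Nat.cast_nonneg n) a
  have hstep : ∀ n, ∫⁻ ω, (∫⁻ a, G n (a, W ω)) ∂P
      = ∫⁻ ω, ENNReal.ofReal (f n (A ω, W ω)) ∂P := by
    intro n
    calc ∫⁻ ω, (∫⁻ a, G n (a, W ω)) ∂P
        = ∫⁻ ω, ENNReal.ofReal (∫ a, f n (a, W ω) * q₀ (a, W ω)) ∂P :=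
          lintegral_congr fun ω => hL1 n ω
      _ = ENNReal.ofReal (∫ ω, (∫ a, f n (a, W ω) * q₀ (a, W ω)) ∂P) :=
          (ofReal_integral_eq_lintegral_ofReal
            (int_bdd (hJ_sm n).aestronglyMeasurable (hJ_bd n))
            (Filter.Eventually.of_forall (hJ_nonneg n))).symm
      _ = ENNReal.ofReal (∫ ω, f n (A ω, W ω) ∂P) := by
          rw [← hq₀_density (f n) (hf_meas n) ⟨1, hf_bd n⟩]
      _ = ∫⁻ ω, ENNReal.ofReal (f n (A ω, W ω)) ∂P :=
          ofReal_integral_eq_lintegral_ofReal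
            (int_bdd ((hf_meas n).comp (hA.prodMk hW)).aestronglyMeasurable
              (fun ω => hf_bd n _))
            (Filter.Eventually.of_forall fun ω => hf_nonneg n _)
  calc ∫⁻ ω, (∫⁻ a, S.indicator (fun x => ENNReal.ofReal (q₀ x)) (a, W ω)) ∂P
      = ∫⁻ ω, (∫⁻ a, ⨆ n, G n (a, W ω)) ∂P :=
        lintegral_congr fun ω => lintegral_congr fun a => (hG_sup _).symm
    _ = ∫⁻ ω, ⨆ n, (∫⁻ a, G n (a, W ω)) ∂P := by
        refine lintegral_congr fun ω => ?_
        exact lintegral_iSup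
          (fun n => ((hG_meas n).comp (measurable_id.prodMk measurable_const) :
            Measurable fun a => G n (a, W ω)))
          (fun m n hmn a => hG_mono hmn _)
    _ = ⨆ n, ∫⁻ ω, (∫⁻ a, G n (a, W ω)) ∂P := by
        refine lintegral_iSup (fun n => ?_)
          (fun m n hmn ω => lintegral_mono fun a => hG_mono hmn _)
        exact (((hG_meas n).comp
          (measurable_snd.prodMk (hW.comp measurable_fst))).lintegral_prod_right' :
            Measurable fun ω => ∫⁻ a, G n (a, W ω))
    _ = ⨆ n, ∫⁻ ω, ENNReal.ofReal (f n (A ω, W ω)) ∂P := iSup_congr hstep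
    _ = ∫⁻ ω, ⨆ n, ENNReal.ofReal (f n (A ω, W ω)) ∂P := by
        exact (lintegral_iSup
          (fun n => (((hf_meas n).comp (hA.prodMk hW)).ennreal_ofReal :
            Measurable fun ω => ENNReal.ofReal (f n (A ω, W ω))))
          (fun m n hmn ω => ENNReal.ofReal_le_ofReal (hf_mono hmn _))).symm
    _ = ∫⁻ ω, ((fun ω' => (A ω', W ω')) ⁻¹' S).indicator (fun _ => (1 : ℝ≥0∞)) ω ∂P := by
        refine lintegral_congr fun ω => ?_
        by_cases hx : (A ω, W ω) ∈ S
        · rw [Set.indicator_of_mem (show ω ∈ _ from hx)]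
          apply le_antisymm
          · exact iSup_le fun n => ENNReal.ofReal_le_one.2 (hf_le_one n _)
          · obtain ⟨n, hn⟩ := exists_nat_ge (max |A ω| (q₀ (A ω, W ω)))
            refine le_iSup_of_le n ?_
            have : f n (A ω, W ω) = 1 := by
              simp only [hf_def]
              rw [if_pos ⟨hx, (le_max_left _ _).trans hn⟩,
                min_eq_left ((one_le_div (hq₀_pos _)).2 ((le_max_right _ _).trans hn))]
            rw [this, ENNReal.ofReal_one]
        · rw [Set.indicator_of_notMem (show ω ∉ _ from hx)]
          have : ∀ n, f n (A ω, W ω) = 0 := fun n => by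
            simp only [hf_def]
            exact if_neg fun h => hx h.1
          simp [this]
    _ = P ((fun ω => (A ω, W ω)) ⁻¹' S) := lintegral_indicator_one ((hA.prodMk hW) hS)

lemma key_shift {Ω 𝒲 : Type*} [MeasurableSpace Ω] [MeasurableSpace 𝒲]
    (P : Measure Ω) [IsProbabilityMeasure P]
    {W : Ω → 𝒲} (hW : Measurable W) {A : Ω → ℝ} (hA : Measurable A)
    {q₀ : ℝ × 𝒲 → ℝ} (hq₀_meas : Measurable q₀) (hq₀_pos : ∀ x, 0 < q₀ x)
    (hq₀_density : ∀ f : ℝ × 𝒲 → ℝ, Measurable f → (∃ M : ℝ, ∀ x, |f x| ≤ M) →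
      ∫ ω, f (A ω, W ω) ∂P = ∫ ω, (∫ a : ℝ, f (a, W ω) * q₀ (a, W ω)) ∂P)
    {δ : 𝒲 → ℝ} (hδ : Measurable δ)
    {H₀ : ℝ × 𝒲 → ℝ} (hH₀ : ∀ a w, H₀ (a, w) = q₀ (a - δ w, w) / q₀ (a, w))
    {M : ℝ} (hM : 0 ≤ M) (hH₀_bd : ∀ ω, |H₀ (A ω, W ω)| ≤ M)
    {F : ℝ × 𝒲 → ℝ} (hF_meas : Measurable F) {K : ℝ} (hF_bd : ∀ x, |F x| ≤ K) :
    ∫ ω, H₀ (A ω, W ω) * F (A ω, W ω) ∂P = ∫ ω, F (A ω + δ (W ω), W ω) ∂P := by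
  have hH₀_eq : H₀ = fun x : ℝ × 𝒲 => q₀ (x.1 - δ x.2, x.2) / q₀ x := by
    funext x; obtain ⟨a, w⟩ := x; exact hH₀ a w
  have hH₀_meas : Measurable H₀ := by
    rw [hH₀_eq]
    exact (hq₀_meas.comp ((measurable_fst.sub (hδ.comp measurable_snd)).prodMk
      measurable_snd)).div hq₀_meas
  have hH₀_nonneg : ∀ x, 0 ≤ H₀ x := by
    intro x
    rw [hH₀_eq]
    exact div_nonneg (hq₀_pos _).le (hq₀_pos _).le
  -- a.e. integrability of the density in `a`
  have hmeas_inner : ∀ (S : Set (ℝ × 𝒲)), MeasurableSet S → Measurable fun ω =>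
      ∫⁻ a, S.indicator (fun x => ENNReal.ofReal (q₀ x)) (a, W ω) := by
    intro S hS
    exact (((hq₀_meas.ennreal_ofReal).indicator hS).comp
      (measurable_snd.prodMk (hW.comp measurable_fst))).lintegral_prod_right'
  have hF1 : ∀ᵐ ω ∂P, Integrable (fun a => q₀ (a, W ω)) := by
    have h := mass_lemma P hW hA hq₀_meas hq₀_pos hq₀_density (MeasurableSet.univ (α := ℝ × 𝒲))
    simp only [Set.indicator_univ, Set.preimage_univ] at h
    have hfin := ae_lt_top (hmeas_inner Set.univ MeasurableSet.univ)
      (by simp only [Set.indicator_univ] at h ⊢; rw [h]; exact (measure_lt_top P _).ne)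
    filter_upwards [hfin] with ω hω
    refine ⟨(hq₀_meas.comp (measurable_id.prodMk measurable_const)).aestronglyMeasurable, ?_⟩
    rw [hasFiniteIntegral_iff_ofReal (Filter.Eventually.of_forall fun a => (hq₀_pos _).le)]
    simpa only [Set.indicator_univ] using hω
  have hF2 : ∀ᵐ ω ∂P, ∀ᵐ a ∂(volume : Measure ℝ), H₀ (a, W ω) ≤ M := by
    set S : Set (ℝ × 𝒲) := {x | M < H₀ x} with hS_def
    have hS : MeasurableSet S := measurableSet_lt measurable_const hH₀_meas
    have hpre : (fun ω => (A ω, W ω)) ⁻¹' S = ∅ := by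
      ext ω
      simp only [Set.mem_preimage, Set.mem_empty_iff_false, iff_false, hS_def,
        Set.mem_setOf_eq, not_lt]
      exact (abs_le.1 (hH₀_bd ω)).2
    have h := mass_lemma P hW hA hq₀_meas hq₀_pos hq₀_density hS
    rw [hpre, measure_empty] at h
    have h0 := (lintegral_eq_zero_iff (hmeas_inner S hS)).1 h
    filter_upwards [h0] with ω hω
    have h0' := (lintegral_eq_zero_iff
      (((hq₀_meas.ennreal_ofReal).indicator hS).comp
        (measurable_id.prodMk measurable_const))).1 hω
    filter_upwards [h0'] with a ha
    by_contra hlt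
    have hmem : (a, W ω) ∈ S := not_le.1 hlt
    have ha' : S.indicator (fun x => ENNReal.ofReal (q₀ x)) (a, W ω) = 0 := ha
    rw [Set.indicator_of_mem hmem] at ha'
    exact (ENNReal.ofReal_pos.2 (hq₀_pos (a, W ω))).ne' ha'
  -- the bounded test function
  set fstar : ℝ × 𝒲 → ℝ := fun x => min (H₀ x) M * F x - F (x.1 + δ x.2, x.2) with hfstar_def
  have hfstar_meas : Measurable fstar :=
    ((hH₀_meas.min measurable_const).mul hF_meas).sub
      (hF_meas.comp ((measurable_fst.add (hδ.comp measurable_snd)).prodMk measurable_snd))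
  have hmin_bd : ∀ x, |min (H₀ x) M| ≤ M := fun x =>
    abs_le.2 ⟨by linarith [le_min (hH₀_nonneg x) hM], min_le_right _ _⟩
  have hfstar_bd : ∀ x, |fstar x| ≤ M * K + K := by
    intro x
    simp only [hfstar_def, sub_eq_add_neg]
    refine (abs_add_le _ _).trans (add_le_add ?_ ?_)
    · exact abs_mul_le' (hmin_bd x) (hF_bd x)
    · rw [abs_neg]; exact hF_bd _
  have hint_HF : Integrable (fun ω => H₀ (A ω, W ω) * F (A ω, W ω)) P :=
    int_bdd ((hH₀_meas.comp (hA.prodMk hW)).mul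
      (hF_meas.comp (hA.prodMk hW))).aestronglyMeasurable
      (fun ω => abs_mul_le' (hH₀_bd ω) (hF_bd _))
  have hshift_meas : Measurable fun ω => F (A ω + δ (W ω), W ω) :=
    hF_meas.comp ((hA.add (hδ.comp hW)).prodMk hW)
  have hint_Fs : Integrable (fun ω => F (A ω + δ (W ω), W ω)) P :=
    int_bdd hshift_meas.aestronglyMeasurable (fun ω => hF_bd _)
  have hdens := hq₀_density fstar hfstar_meas ⟨M * K + K, hfstar_bd⟩
  have hLHS : ∫ ω, fstar (A ω, W ω) ∂P
      = ∫ ω, H₀ (A ω, W ω) * F (A ω, W ω) ∂P - ∫ ω, F (A ω + δ (W ω), W ω) ∂P := by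
    have hpt : ∀ ω, fstar (A ω, W ω)
        = H₀ (A ω, W ω) * F (A ω, W ω) - F (A ω + δ (W ω), W ω) := by
      intro ω
      simp only [hfstar_def]
      rw [min_eq_left (abs_le.1 (hH₀_bd ω)).2]
    rw [integral_congr_ae (Filter.Eventually.of_forall hpt)]
    exact integral_sub hint_HF hint_Fs
  have hRHS : ∫ ω, (∫ a, fstar (a, W ω) * q₀ (a, W ω)) ∂P = 0 := by
    have hae : ∀ᵐ ω ∂P, (∫ a, fstar (a, W ω) * q₀ (a, W ω)) = 0 := by
      filter_upwards [hF1, hF2] with ω h1 h2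
      set w := W ω with hw_def
      set u : ℝ → ℝ := fun a => q₀ (a - δ w, w) * F (a, w) with hu_def
      have hq_shift : Integrable (fun a => q₀ (a - δ w, w)) := h1.comp_sub_right (δ w)
      have hu_int : Integrable u := by
        refine Integrable.mono' (hq_shift.mul_const K)
          ((hq₀_meas.comp ((measurable_id.sub measurable_const).prodMk
            measurable_const)).mul
            (hF_meas.comp (measurable_id.prodMk measurable_const))).aestronglyMeasurable ?_
        refine Filter.Eventually.of_forall fun a => ?_
        rw [hu_def]
        simp only [Real.norm_eq_abs, abs_mul, abs_of_nonneg (hq₀_pos (a - δ w, w)).le]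
        exact mul_le_mul_of_nonneg_left (hF_bd _) (hq₀_pos _).le
      have hcong : ∀ᵐ a ∂(volume : Measure ℝ),
          fstar (a, w) * q₀ (a, w) = u a - u (a + δ w) := by
        filter_upwards [h2] with a hHa
        have e1 : H₀ (a, w) * q₀ (a, w) = q₀ (a - δ w, w) := by
          rw [hH₀ a w]; exact div_mul_cancel₀ _ (hq₀_pos (a, w)).ne'
        simp only [hfstar_def, hu_def, add_sub_cancel_right]
        rw [min_eq_left hHa]
        linear_combination F (a, w) * e1
      calc ∫ a, fstar (a, w) * q₀ (a, w)
          = ∫ a, (u a - u (a + δ w)) := integral_congr_ae hcong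
        _ = (∫ a, u a) - ∫ a, u (a + δ w) :=
            integral_sub hu_int (hu_int.comp_add_right (δ w))
        _ = 0 := by rw [integral_add_right_eq_self u (δ w), sub_self]
    calc ∫ ω, (∫ a, fstar (a, W ω) * q₀ (a, W ω)) ∂P
        = ∫ ω, (0 : ℝ) ∂P := integral_congr_ae hae
      _ = 0 := integral_zero _ _
  rw [hLHS, hRHS] at hdens
  linarith [hdens]

lemma condexp_sup_of_condIndep {Ω : Type*} {m' : MeasurableSpace Ω} [mΩ : MeasurableSpace Ω]
    [StandardBorelSpace Ω]
    (P : Measure Ω) [IsProbabilityMeasure P]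
    (hm' : m' ≤ mΩ)
    {A : Ω → ℝ} (hA : Measurable A)
    {C : Ω → ℝ} (hC : Measurable C) (hC01 : ∀ ω, C ω = 0 ∨ C ω = 1)
    {G' : Ω → ℝ} (hG'_sm : StronglyMeasurable[m'] G') (hG'_bd : ∀ ω, |G' ω| ≤ 1)
    (hg₀_condexp : P[C | m'] =ᵐ[P] G')
    (hCAR : CondIndepFun m' hm' C A P) :
    G' =ᵐ[P] P[C | m' ⊔ MeasurableSpace.comap A inferInstance] := by
  have hmA : MeasurableSpace.comap A inferInstance ≤ mΩ := hA.comap_le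
  have h𝒢 : m' ⊔ MeasurableSpace.comap A inferInstance ≤ mΩ := sup_le hm' hmA
  have hC_bd : ∀ ω, |C ω| ≤ 1 := fun ω => by rcases hC01 ω with h | h <;> simp [h]
  have hC_int : Integrable C P := int_bdd hC.aestronglyMeasurable hC_bd
  have hg₀_int : Integrable G' P :=
    int_bdd (hG'_sm.mono hm').aestronglyMeasurable hG'_bd
  have hC_ind : (C ⁻¹' {1}).indicator (fun _ => (1 : ℝ)) = C := by
    funext x
    rcases hC01 x with h | h <;>
      simp [Set.indicator_apply, Set.mem_preimage, h]
  have hCeq : P[Set.indicator (C ⁻¹' {1}) (fun _ => (1 : ℝ)) | m'] =ᵐ[P] G' := by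
    rw [hC_ind]; exact hg₀_condexp
  set π : Set (Set Ω) :=
    {s | ∃ t, MeasurableSet[m'] t ∧ ∃ v : Set ℝ, MeasurableSet v ∧ s = t ∩ A ⁻¹' v}
    with hπ_def
  have h_gen : m' ⊔ MeasurableSpace.comap A inferInstance
      = MeasurableSpace.generateFrom π := by
    apply le_antisymm
    · refine sup_le (fun t ht => ?_) (fun s hs => ?_)
      · exact MeasurableSpace.measurableSet_generateFrom
          ⟨t, ht, Set.univ, MeasurableSet.univ, by simp⟩
      · obtain ⟨v, hv, rfl⟩ := hs
        exact MeasurableSpace.measurableSet_generateFrom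
          ⟨Set.univ, MeasurableSet.univ, v, hv, by simp⟩
    · refine MeasurableSpace.generateFrom_le ?_
      rintro s ⟨t, ht, v, hv, rfl⟩
      exact MeasurableSet.inter
        ((le_sup_left : m' ≤ m' ⊔ MeasurableSpace.comap A inferInstance) t ht)
        ((le_sup_right : MeasurableSpace.comap A inferInstance
          ≤ m' ⊔ MeasurableSpace.comap A inferInstance) (A ⁻¹' v) ⟨v, hv, rfl⟩)
  have hπ_pi : IsPiSystem π := by
    rintro s₁ ⟨t₁, ht₁, v₁, hv₁, rfl⟩ s₂ ⟨t₂, ht₂, v₂, hv₂, rfl⟩ _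
    refine ⟨t₁ ∩ t₂, ht₁.inter ht₂, v₁ ∩ v₂, hv₁.inter hv₂, ?_⟩
    ext x
    simp only [Set.mem_inter_iff, Set.mem_preimage]
    tauto
  have huniv : ∫ x, C x ∂P = ∫ x, G' x ∂P := by
    rw [← integral_condExp hm' (f := C)]
    exact integral_congr_ae hg₀_condexp
  have hΦ : ∀ s, MeasurableSet[m' ⊔ MeasurableSpace.comap A inferInstance] s →
      ∫ x in s, C x ∂P = ∫ x in s, G' x ∂P := by
    intro s hs
    refine @MeasurableSpace.induction_on_inter Ω
      (m' ⊔ MeasurableSpace.comap A inferInstance)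
      (fun s _ => ∫ x in s, C x ∂P = ∫ x in s, G' x ∂P) π
      h_gen hπ_pi (by simp) ?_ ?_ ?_ s hs
    · -- basic
      rintro s' ⟨t, ht, v, hv, rfl⟩
      have htm : MeasurableSet t := hm' t ht
      have hum : MeasurableSet (A ⁻¹' v) := hA hv
      have hind_u_int : Integrable ((A ⁻¹' v).indicator (fun _ => (1 : ℝ))) P := by
        refine int_bdd ((measurable_const.indicator hum).aestronglyMeasurable
          (μ := P)) (M := 1) ?_
        intro ω
        by_cases h : ω ∈ A ⁻¹' v <;>
          simp [Set.indicator_of_mem, Set.indicator_of_notMem, h]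
      have hCu_int : Integrable ((C ⁻¹' {1} ∩ A ⁻¹' v).indicator (fun _ => (1 : ℝ))) P := by
        refine int_bdd ((measurable_const.indicator
          ((hC (measurableSet_singleton 1)).inter hum)).aestronglyMeasurable (μ := P))
          (M := 1) ?_
        intro ω
        by_cases h : ω ∈ C ⁻¹' {1} ∩ A ⁻¹' v <;>
          simp [Set.indicator_of_mem, Set.indicator_of_notMem, h]
      have hprod_int : Integrable
          (G' * (A ⁻¹' v).indicator (fun _ => (1 : ℝ))) P := by
        refine int_bdd ((hG'_sm.mono hm').measurable.mul
          (measurable_const.indicator hum)).aestronglyMeasurable (M := 1) ?_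
        intro ω
        rw [Pi.mul_apply]
        by_cases h : ω ∈ A ⁻¹' v
        · rw [Set.indicator_of_mem h, mul_one]; exact hG'_bd _
        · rw [Set.indicator_of_notMem h, mul_zero, abs_zero]; exact zero_le_one
      have hCI := (condIndepFun_iff_condExp_inter_preimage_eq_mul
        (hm' := hm') hC hA).1 hCAR {1} v (measurableSet_singleton 1) hv
      have hpull := condExp_stronglyMeasurable_mul_of_bound hm' hG'_sm hind_u_int 1
        (Filter.Eventually.of_forall fun x => by
          rw [Real.norm_eq_abs]; exact hG'_bd _)
      calc ∫ x in t ∩ A ⁻¹' v, C x ∂P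
          = ∫ x in t, (A ⁻¹' v).indicator C x ∂P := (setIntegral_indicator hum).symm
        _ = ∫ x in t, (C ⁻¹' {1} ∩ A ⁻¹' v).indicator (fun _ => (1 : ℝ)) x ∂P := by
            refine integral_congr_ae (Filter.Eventually.of_forall fun x => ?_)
            by_cases hx : x ∈ A ⁻¹' v
            · rcases hC01 x with h | h <;>
                simp [Set.indicator_apply, hx, h, Set.mem_preimage]
            · simp [Set.indicator_apply, hx]
        _ = ∫ x in t, (P[Set.indicator (C ⁻¹' {1} ∩ A ⁻¹' v) (fun _ => (1 : ℝ)) | m']) x ∂P :=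
            (setIntegral_condExp hm' hCu_int ht).symm
        _ = ∫ x in t, G' x *
              (P[Set.indicator (A ⁻¹' v) (fun _ => (1 : ℝ)) | m']) x ∂P := by
            refine integral_congr_ae (ae_restrict_of_ae ?_)
            filter_upwards [hCI, hCeq] with x h1 h2
            rw [h1, h2]
        _ = ∫ x in t, (P[G' *
              (A ⁻¹' v).indicator (fun _ => (1 : ℝ)) | m']) x ∂P := by
            refine integral_congr_ae (ae_restrict_of_ae ?_)
            filter_upwards [hpull] with x hx
            rw [hx, Pi.mul_apply]
        _ = ∫ x in t, (G' *
              (A ⁻¹' v).indicator (fun _ => (1 : ℝ))) x ∂P :=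
            setIntegral_condExp hm' hprod_int ht
        _ = ∫ x in t, (A ⁻¹' v).indicator G' x ∂P := by
            refine integral_congr_ae (Filter.Eventually.of_forall fun x => ?_)
            rw [Pi.mul_apply]
            by_cases hx : x ∈ A ⁻¹' v <;>
              simp [Set.indicator_of_mem, Set.indicator_of_notMem, hx]
        _ = ∫ x in t ∩ A ⁻¹' v, G' x ∂P := setIntegral_indicator hum
    · -- compl
      rintro s' hs' hΦs'
      have hsm : MeasurableSet s' := h𝒢 s' hs'
      have h1 := integral_add_compl hsm hC_int
      have h2 := integral_add_compl hsm hg₀_int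
      linarith
    · -- union
      rintro f hdisj hmeas hΦf
      have hm : ∀ i, MeasurableSet (f i) := fun i => h𝒢 _ (hmeas i)
      rw [integral_iUnion hm hdisj hC_int.integrableOn,
        integral_iUnion hm hdisj hg₀_int.integrableOn]
      exact tsum_congr hΦf
  exact ae_eq_condExp_of_forall_setIntegral_eq h𝒢 hC_int
    (fun s _ _ => hg₀_int.integrableOn)
    (fun s hs _ => (hΦ s hs).symm)
    ⟨G', hG'_sm.mono le_sup_left, Filter.EventuallyEq.rfl⟩


/-- Multiple robustness, case (i) with correct exposure density: if the conditional
influence-function regression `G` is correctly specified, the observed-data EIF has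
mean zero for an arbitrary sampling mechanism `g` and an arbitrary bounded outcome
regression `Q̄` (with correct density ratio `H₀`). -/
theorem multiple_robustness_case_i_density
    {Ω 𝒲 : Type*} [MeasurableSpace Ω] [StandardBorelSpace Ω] [Nonempty Ω]
    [MeasurableSpace 𝒲]
    (P : Measure Ω) [IsProbabilityMeasure P]
    (W : Ω → 𝒲) (hW : Measurable W)
    (A : Ω → ℝ) (hA : Measurable A)
    (Y : Ω → ℝ) (hY : Measurable Y) (hY_bd : ∃ M : ℝ, ∀ ω, |Y ω| ≤ M)
    (q₀ : ℝ × 𝒲 → ℝ) (hq₀_meas : Measurable q₀)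
    (hq₀_nonneg : ∀ x, 0 ≤ q₀ x)
    (hq₀_density : ∀ f : ℝ × 𝒲 → ℝ, Measurable f → (∃ M : ℝ, ∀ x, |f x| ≤ M) →
      ∫ ω, f (A ω, W ω) ∂P = ∫ ω, (∫ a : ℝ, f (a, W ω) * q₀ (a, W ω)) ∂P)
    (Qbar₀ : ℝ × 𝒲 → ℝ) (hQbar₀_meas : Measurable Qbar₀)
    (hQbar₀_bd : ∃ M : ℝ, ∀ x, |Qbar₀ x| ≤ M)
    (hQbar₀_condexp :
      P[Y | MeasurableSpace.comap (fun ω => (A ω, W ω)) inferInstance]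
        =ᵐ[P] fun ω => Qbar₀ (A ω, W ω))
    (δ : 𝒲 → ℝ) (hδ : Measurable δ)
    (ψ₀ : ℝ) (hψ₀ : ψ₀ = ∫ ω, Qbar₀ (A ω + δ (W ω), W ω) ∂P)
    (hq₀_pos : ∀ x, 0 < q₀ x)
    (H₀ : ℝ × 𝒲 → ℝ)
    (hH₀ : ∀ a w, H₀ (a, w) = q₀ (a - δ w, w) / q₀ (a, w))
    (hH₀_bd : ∃ M : ℝ, ∀ ω, |H₀ (A ω, W ω)| ≤ M)
    (C : Ω → ℝ) (hC : Measurable C) (hC01 : ∀ ω, C ω = 0 ∨ C ω = 1)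
    (g₀ : ℝ × 𝒲 → ℝ) (hg₀_meas : Measurable g₀)
    (ε : ℝ) (hε : 0 < ε) (hg₀_bd : ∀ x, ε ≤ g₀ x ∧ g₀ x ≤ 1)
    (hg₀_condexp :
      P[C | MeasurableSpace.comap (fun ω => (Y ω, W ω)) inferInstance]
        =ᵐ[P] fun ω => g₀ (Y ω, W ω))
    (hCAR : CondIndepFun
      (MeasurableSpace.comap (fun ω => (Y ω, W ω)) inferInstance)
      ((hY.prodMk hW).comap_le) C A P)
    (Qbar : ℝ × 𝒲 → ℝ) (hQbar_meas : Measurable Qbar)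
    (hQbar_bd : ∃ M : ℝ, ∀ x, |Qbar x| ≤ M)
    (G : ℝ × 𝒲 → ℝ) (hG_meas : Measurable G) (hG_bd : ∃ M : ℝ, ∀ x, |G x| ≤ M)
    (hG_condexp :
      P[fun ω => H₀ (A ω, W ω) * (Y ω - Qbar (A ω, W ω))
          + Qbar (A ω + δ (W ω), W ω) - ψ₀
        | MeasurableSpace.comap (fun ω => (Y ω, W ω)) inferInstance]
        =ᵐ[P] fun ω => G (Y ω, W ω))
    (g : ℝ × 𝒲 → ℝ) (hg_meas : Measurable g)
    (ε' : ℝ) (hε' : 0 < ε') (hg_bd : ∀ x, ε' ≤ g x ∧ g x ≤ 1) :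
    ∫ ω, ((C ω / g (Y ω, W ω))
          * (H₀ (A ω, W ω) * (Y ω - Qbar (A ω, W ω))
            + Qbar (A ω + δ (W ω), W ω) - ψ₀)
        - (C ω / g (Y ω, W ω) - 1) * G (Y ω, W ω)) ∂P = 0 := by
    classical
  obtain ⟨MY, hMY⟩ := hY_bd
  obtain ⟨MQ0, hMQ0⟩ := hQbar₀_bd
  obtain ⟨MH, hMH⟩ := hH₀_bd
  obtain ⟨MQ, hMQ⟩ := hQbar_bd
  obtain ⟨MG, hMG⟩ := hG_bd
  have hMH0 : 0 ≤ MH := (abs_nonneg _).trans (hMH (Classical.arbitrary Ω))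
  -- abbreviations (inline σ-algebras to avoid instance pollution)
  have hYWm : Measurable fun ω => (Y ω, W ω) := hY.prodMk hW
  have hAWm : Measurable fun ω => (A ω, W ω) := hA.prodMk hW
  have hm'le : MeasurableSpace.comap (fun ω => (Y ω, W ω)) inferInstance
      ≤ (inferInstance : MeasurableSpace Ω) := hYWm.comap_le
  have h𝒜le : MeasurableSpace.comap (fun ω => (A ω, W ω)) inferInstance
      ≤ (inferInstance : MeasurableSpace Ω) := hAWm.comap_le
  have h𝒢le : MeasurableSpace.comap (fun ω => (Y ω, W ω)) inferInstance
      ⊔ MeasurableSpace.comap A inferInstance ≤ (inferInstance : MeasurableSpace Ω) :=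
    sup_le hm'le hA.comap_le
  set D : Ω → ℝ := fun ω => H₀ (A ω, W ω) * (Y ω - Qbar (A ω, W ω))
      + Qbar (A ω + δ (W ω), W ω) - ψ₀ with hD_def
  have hH₀_eq : H₀ = fun x : ℝ × 𝒲 => q₀ (x.1 - δ x.2, x.2) / q₀ x := by
    funext x; obtain ⟨a, w⟩ := x; exact hH₀ a w
  have hH₀_meas : Measurable H₀ := by
    rw [hH₀_eq]
    exact (hq₀_meas.comp ((measurable_fst.sub (hδ.comp measurable_snd)).prodMk
      measurable_snd)).div hq₀_meas
  have habs_sub : ∀ a b : ℝ, |a - b| ≤ |a| + |b| := fun a b => by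
    rw [sub_eq_add_neg]
    exact (abs_add_le a (-b)).trans (by rw [abs_neg])
  -- measurability of composites
  have hH₀AW : Measurable fun ω => H₀ (A ω, W ω) := hH₀_meas.comp hAWm
  have hQAW : Measurable fun ω => Qbar (A ω, W ω) := hQbar_meas.comp hAWm
  have hQsh : Measurable fun ω => Qbar (A ω + δ (W ω), W ω) :=
    hQbar_meas.comp ((hA.add (hδ.comp hW)).prodMk hW)
  have hGYWm : Measurable fun ω => G (Y ω, W ω) := hG_meas.comp hYWm
  have hD_meas : Measurable D := by
    rw [hD_def]
    exact ((hH₀AW.mul (hY.sub hQAW)).add hQsh).sub measurable_const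
  have hD_bd : ∀ ω, |D ω| ≤ MH * (MY + MQ) + MQ + |ψ₀| := by
    intro ω
    rw [hD_def]
    refine (habs_sub _ _).trans (add_le_add ((abs_add_le _ _).trans (add_le_add ?_ (hMQ _))) le_rfl)
    exact abs_mul_le' (hMH ω) ((habs_sub _ _).trans (add_le_add (hMY ω) (hMQ _)))
  have hD_int : Integrable D P := int_bdd hD_meas.aestronglyMeasurable hD_bd
  have hGYW_int : Integrable (fun ω => G (Y ω, W ω)) P :=
    int_bdd hGYWm.aestronglyMeasurable (fun ω => hMG _)
  have hY_int : Integrable Y P := int_bdd hY.aestronglyMeasurable hMY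
  -- Step A: ∫ D = 0
  have hF_meas : Measurable fun x : ℝ × 𝒲 => Qbar₀ x - Qbar x := hQbar₀_meas.sub hQbar_meas
  have hF_bd : ∀ x, |Qbar₀ x - Qbar x| ≤ MQ0 + MQ := fun x =>
    (habs_sub _ _).trans (add_le_add (hMQ0 x) (hMQ x))
  have hKey := key_shift P hW hA hq₀_meas hq₀_pos hq₀_density hδ hH₀ hMH0 hMH hF_meas hF_bd
  have hH₀AW_sm : StronglyMeasurable[MeasurableSpace.comap (fun ω => (A ω, W ω)) inferInstance]
      (fun ω => H₀ (A ω, W ω)) :=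
    (hH₀_meas.comp (measurable_iff_comap_le.2 le_rfl)).stronglyMeasurable
  have htower : ∫ ω, H₀ (A ω, W ω) * Y ω ∂P
      = ∫ ω, H₀ (A ω, W ω) * Qbar₀ (A ω, W ω) ∂P := by
    have hpull := condExp_stronglyMeasurable_mul_of_bound h𝒜le hH₀AW_sm hY_int MH
      (Filter.Eventually.of_forall fun ω => by rw [Real.norm_eq_abs]; exact hMH ω)
    calc ∫ ω, H₀ (A ω, W ω) * Y ω ∂P
        = ∫ ω, ((fun ω => H₀ (A ω, W ω)) * Y) ω ∂P := rfl
      _ = ∫ ω, (P[(fun ω => H₀ (A ω, W ω)) * Y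
            | MeasurableSpace.comap (fun ω => (A ω, W ω)) inferInstance]) ω ∂P :=
          (integral_condExp h𝒜le).symm
      _ = ∫ ω, H₀ (A ω, W ω) * (P[Y
            | MeasurableSpace.comap (fun ω => (A ω, W ω)) inferInstance]) ω ∂P := by
          refine integral_congr_ae ?_
          filter_upwards [hpull] with ω h
          rw [h, Pi.mul_apply]
      _ = ∫ ω, H₀ (A ω, W ω) * Qbar₀ (A ω, W ω) ∂P := by
          refine integral_congr_ae ?_
          filter_upwards [hQbar₀_condexp] with ω h
          rw [h]
  have hint_HY : Integrable (fun ω => H₀ (A ω, W ω) * Y ω) P :=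
    int_bdd (hH₀AW.mul hY).aestronglyMeasurable (fun ω => abs_mul_le' (hMH ω) (hMY ω))
  have hint_HQ : Integrable (fun ω => H₀ (A ω, W ω) * Qbar (A ω, W ω)) P :=
    int_bdd (hH₀AW.mul hQAW).aestronglyMeasurable (fun ω => abs_mul_le' (hMH ω) (hMQ _))
  have hint_HQ0 : Integrable (fun ω => H₀ (A ω, W ω) * Qbar₀ (A ω, W ω)) P :=
    int_bdd (hH₀AW.mul (hQbar₀_meas.comp hAWm)).aestronglyMeasurable
      (fun ω => abs_mul_le' (hMH ω) (hMQ0 _))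
  have hint_Q0sh : Integrable (fun ω => Qbar₀ (A ω + δ (W ω), W ω)) P :=
    int_bdd ((hQbar₀_meas.comp ((hA.add (hδ.comp hW)).prodMk hW)).aestronglyMeasurable)
      (fun ω => hMQ0 _)
  have hint_Qsh : Integrable (fun ω => Qbar (A ω + δ (W ω), W ω)) P :=
    int_bdd hQsh.aestronglyMeasurable (fun ω => hMQ _)
  have hKey' : (∫ ω, H₀ (A ω, W ω) * Qbar₀ (A ω, W ω) ∂P)
      - (∫ ω, H₀ (A ω, W ω) * Qbar (A ω, W ω) ∂P)
      = (∫ ω, Qbar₀ (A ω + δ (W ω), W ω) ∂P)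
        - ∫ ω, Qbar (A ω + δ (W ω), W ω) ∂P := by
    rw [← integral_sub hint_HQ0 hint_HQ, ← integral_sub hint_Q0sh hint_Qsh]
    calc ∫ ω, (H₀ (A ω, W ω) * Qbar₀ (A ω, W ω) - H₀ (A ω, W ω) * Qbar (A ω, W ω)) ∂P
        = ∫ ω, H₀ (A ω, W ω) * (Qbar₀ (A ω, W ω) - Qbar (A ω, W ω)) ∂P := by
          refine integral_congr_ae (Filter.Eventually.of_forall fun ω => ?_)
          ring
      _ = ∫ ω, (Qbar₀ (A ω + δ (W ω), W ω) - Qbar (A ω + δ (W ω), W ω)) ∂P := hKey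
  have hintD : ∫ ω, D ω ∂P = 0 := by
    have hint_HYQ : Integrable (fun ω => H₀ (A ω, W ω) * (Y ω - Qbar (A ω, W ω))) P :=
      int_bdd (hH₀AW.mul (hY.sub hQAW)).aestronglyMeasurable
        (fun ω => abs_mul_le' (hMH ω) ((habs_sub _ _).trans (add_le_add (hMY ω) (hMQ _))))
    have e0 : ∫ ω, D ω ∂P
        = (∫ ω, (H₀ (A ω, W ω) * (Y ω - Qbar (A ω, W ω))
            + Qbar (A ω + δ (W ω), W ω)) ∂P) - ψ₀ := by
      rw [hD_def]
      have h := integral_sub (f := fun ω => H₀ (A ω, W ω) * (Y ω - Qbar (A ω, W ω))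
          + Qbar (A ω + δ (W ω), W ω)) (g := fun _ => ψ₀)
        (hint_HYQ.add hint_Qsh) (integrable_const ψ₀)
      simpa using h
    have e1 : ∫ ω, (H₀ (A ω, W ω) * (Y ω - Qbar (A ω, W ω))
        + Qbar (A ω + δ (W ω), W ω)) ∂P
        = (∫ ω, H₀ (A ω, W ω) * (Y ω - Qbar (A ω, W ω)) ∂P)
          + ∫ ω, Qbar (A ω + δ (W ω), W ω) ∂P := integral_add hint_HYQ hint_Qsh
    have e2 : ∫ ω, H₀ (A ω, W ω) * (Y ω - Qbar (A ω, W ω)) ∂P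
        = (∫ ω, H₀ (A ω, W ω) * Y ω ∂P)
          - ∫ ω, H₀ (A ω, W ω) * Qbar (A ω, W ω) ∂P := by
      rw [← integral_sub hint_HY hint_HQ]
      refine integral_congr_ae (Filter.Eventually.of_forall fun ω => ?_)
      ring
    rw [e0, e1, e2, htower]
    rw [hψ₀]
    linarith [hKey']
  -- Step B: conditional expectation of the residual is 0
  have hYW' : Measurable[MeasurableSpace.comap (fun ω => (Y ω, W ω)) inferInstance]
      (fun ω => (Y ω, W ω)) := measurable_iff_comap_le.2 le_rfl
  have hGsm' : StronglyMeasurable[MeasurableSpace.comap (fun ω => (Y ω, W ω)) inferInstance]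
      (fun ω => G (Y ω, W ω)) := (hG_meas.comp hYW').stronglyMeasurable
  have hξ_cond : P[(fun ω => D ω - G (Y ω, W ω))
      | MeasurableSpace.comap (fun ω => (Y ω, W ω)) inferInstance] =ᵐ[P] 0 := by
    have h1 : P[(fun ω => D ω - G (Y ω, W ω))
        | MeasurableSpace.comap (fun ω => (Y ω, W ω)) inferInstance] =ᵐ[P]
        P[D | MeasurableSpace.comap (fun ω => (Y ω, W ω)) inferInstance]
          - P[(fun ω => G (Y ω, W ω))
            | MeasurableSpace.comap (fun ω => (Y ω, W ω)) inferInstance] :=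
      condExp_sub hD_int hGYW_int _
    have h2 : P[(fun ω => G (Y ω, W ω))
        | MeasurableSpace.comap (fun ω => (Y ω, W ω)) inferInstance]
        = fun ω => G (Y ω, W ω) :=
      condExp_of_stronglyMeasurable hm'le hGsm' hGYW_int
    filter_upwards [h1, hG_condexp] with ω hω hGω
    rw [Pi.zero_apply, hω, Pi.sub_apply, h2, hGω, sub_self]
  -- Step C: E[C | 𝒢] = g₀(Y, W)
  have hg₀bd1 : ∀ ω, |g₀ (Y ω, W ω)| ≤ 1 := fun ω =>
    abs_le.2 ⟨by linarith [(hg₀_bd (Y ω, W ω)).1, hε], (hg₀_bd (Y ω, W ω)).2⟩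
  have hg₀sm : StronglyMeasurable[MeasurableSpace.comap (fun ω => (Y ω, W ω)) inferInstance]
      (fun ω => g₀ (Y ω, W ω)) := (hg₀_meas.comp hYW').stronglyMeasurable
  have hK : (fun ω => g₀ (Y ω, W ω)) =ᵐ[P]
      P[C | MeasurableSpace.comap (fun ω => (Y ω, W ω)) inferInstance
        ⊔ MeasurableSpace.comap A inferInstance] :=
    condexp_sup_of_condIndep P hm'le hA hC hC01 hg₀sm hg₀bd1 hg₀_condexp hCAR
  -- Step D: assemble
  have hC_bd : ∀ ω, |C ω| ≤ 1 := fun ω => by rcases hC01 ω with h | h <;> simp [h]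
  have hC_int : Integrable C P := int_bdd hC.aestronglyMeasurable hC_bd
  set φξ : Ω → ℝ := fun ω => (g (Y ω, W ω))⁻¹ * (D ω - G (Y ω, W ω)) with hφξ_def
  have hginv_nonneg : ∀ ω, 0 ≤ (g (Y ω, W ω))⁻¹ := fun ω =>
    inv_nonneg.2 (le_trans hε'.le (hg_bd _).1)
  have hginv_bd : ∀ ω, |(g (Y ω, W ω))⁻¹| ≤ ε'⁻¹ := fun ω => by
    rw [abs_of_nonneg (hginv_nonneg ω)]
    exact inv_anti₀ hε' (hg_bd _).1
  have hφξ_bd : ∀ ω, |φξ ω| ≤ ε'⁻¹ * ((MH * (MY + MQ) + MQ + |ψ₀|) + MG) := fun ω =>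
    abs_mul_le' (hginv_bd ω) ((habs_sub _ _).trans (add_le_add (hD_bd ω) (hMG _)))
  -- 𝒢-measurability of φξ
  have hYW𝒢 : Measurable[MeasurableSpace.comap (fun ω => (Y ω, W ω)) inferInstance
      ⊔ MeasurableSpace.comap A inferInstance] (fun ω => (Y ω, W ω)) :=
    measurable_iff_comap_le.2 le_sup_left
  have hA𝒢 : Measurable[MeasurableSpace.comap (fun ω => (Y ω, W ω)) inferInstance
      ⊔ MeasurableSpace.comap A inferInstance] A :=
    measurable_iff_comap_le.2 le_sup_right
  have hW𝒢 : Measurable[MeasurableSpace.comap (fun ω => (Y ω, W ω)) inferInstance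
      ⊔ MeasurableSpace.comap A inferInstance] W := measurable_snd.comp hYW𝒢
  have hY𝒢 : Measurable[MeasurableSpace.comap (fun ω => (Y ω, W ω)) inferInstance
      ⊔ MeasurableSpace.comap A inferInstance] Y := measurable_fst.comp hYW𝒢
  have hφξ_sm : StronglyMeasurable[MeasurableSpace.comap (fun ω => (Y ω, W ω)) inferInstance
      ⊔ MeasurableSpace.comap A inferInstance] φξ := by
    rw [hφξ_def, hD_def]
    refine Measurable.stronglyMeasurable ?_
    exact ((hg_meas.comp hYW𝒢).inv).mul
      (((((hH₀_meas.comp (hA𝒢.prodMk hW𝒢)).mul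
        (hY𝒢.sub (hQbar_meas.comp (hA𝒢.prodMk hW𝒢)))).add
        (hQbar_meas.comp ((hA𝒢.add (hδ.comp hW𝒢)).prodMk hW𝒢))).sub
        measurable_const).sub (hG_meas.comp hYW𝒢))
  have hφξ_meas : Measurable φξ := (hφξ_sm.mono h𝒢le).measurable
  have hφξC_int : Integrable (fun ω => φξ ω * C ω) P :=
    int_bdd (hφξ_meas.mul hC).aestronglyMeasurable
      (fun ω => abs_mul_le' (hφξ_bd ω) (hC_bd ω))
  have hξ_int : Integrable (fun ω => D ω - G (Y ω, W ω)) P := hD_int.sub hGYW_int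
  have hψsm : StronglyMeasurable[MeasurableSpace.comap (fun ω => (Y ω, W ω)) inferInstance]
      (fun ω => (g (Y ω, W ω))⁻¹ * g₀ (Y ω, W ω)) :=
    ((hg_meas.comp hYW').inv.mul (hg₀_meas.comp hYW')).stronglyMeasurable
  have hCφξ : ∫ ω, φξ ω * C ω ∂P = 0 := by
    have hmulbd := condExp_stronglyMeasurable_mul_of_bound h𝒢le hφξ_sm hC_int
      (ε'⁻¹ * ((MH * (MY + MQ) + MQ + |ψ₀|) + MG))
      (Filter.Eventually.of_forall fun ω => by rw [Real.norm_eq_abs]; exact hφξ_bd ω)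
    have hmulbd2 := condExp_stronglyMeasurable_mul_of_bound hm'le hψsm hξ_int
      (ε'⁻¹ * 1)
      (Filter.Eventually.of_forall fun ω => by
        rw [Real.norm_eq_abs]
        exact abs_mul_le' (hginv_bd ω) (hg₀bd1 ω))
    calc ∫ ω, φξ ω * C ω ∂P
        = ∫ ω, (φξ * C) ω ∂P := rfl
      _ = ∫ ω, (P[φξ * C | MeasurableSpace.comap (fun ω => (Y ω, W ω)) inferInstance
            ⊔ MeasurableSpace.comap A inferInstance]) ω ∂P := (integral_condExp h𝒢le).symm
      _ = ∫ ω, φξ ω * (P[C | MeasurableSpace.comap (fun ω => (Y ω, W ω)) inferInstance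
            ⊔ MeasurableSpace.comap A inferInstance]) ω ∂P := by
          refine integral_congr_ae ?_
          filter_upwards [hmulbd] with ω h
          rw [h, Pi.mul_apply]
      _ = ∫ ω, φξ ω * g₀ (Y ω, W ω) ∂P := by
          refine integral_congr_ae ?_
          filter_upwards [hK] with ω h
          rw [← h]
      _ = ∫ ω, ((fun ω => (g (Y ω, W ω))⁻¹ * g₀ (Y ω, W ω))
            * (fun ω => D ω - G (Y ω, W ω))) ω ∂P := by
          refine integral_congr_ae (Filter.Eventually.of_forall fun ω => ?_)
          simp only [hφξ_def, Pi.mul_apply]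
          ring
      _ = ∫ ω, (P[(fun ω => (g (Y ω, W ω))⁻¹ * g₀ (Y ω, W ω))
            * (fun ω => D ω - G (Y ω, W ω))
            | MeasurableSpace.comap (fun ω => (Y ω, W ω)) inferInstance]) ω ∂P :=
          (integral_condExp hm'le).symm
      _ = 0 := by
          have : ∀ᵐ ω ∂P, (P[(fun ω => (g (Y ω, W ω))⁻¹ * g₀ (Y ω, W ω))
              * (fun ω => D ω - G (Y ω, W ω))
              | MeasurableSpace.comap (fun ω => (Y ω, W ω)) inferInstance]) ω = 0 := by
            filter_upwards [hmulbd2, hξ_cond] with ω h1 h2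
            rw [h1, Pi.mul_apply, h2, Pi.zero_apply, mul_zero]
          rw [integral_congr_ae this, integral_zero]
  have hG_int_eq : ∫ ω, G (Y ω, W ω) ∂P = ∫ ω, D ω ∂P := by
    rw [← integral_condExp hm'le (f := D)]
    exact (integral_congr_ae hG_condexp).symm
  have hsplit : (fun ω => C ω / g (Y ω, W ω) * D ω
      - (C ω / g (Y ω, W ω) - 1) * G (Y ω, W ω))
      = fun ω => φξ ω * C ω + G (Y ω, W ω) := by
    funext ω
    simp only [hφξ_def, div_eq_mul_inv]
    ring
  rw [hsplit, integral_add hφξC_int hGYW_int, hCφξ, hG_int_eq, hintD, add_zero]
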